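/- (One order statistic upgrade.) Fix τ∈(0,1), λ≥0, and a location i∈[1:n]. Let θ̂^max_i := max{θ_i : θ∈S^τ} and let θ̂^max∈S^τ attain this value at location i. Let Ĵ=[a:b] be the largest discrete interval containing i such that θ̂^max_u ≤ θ̂^max_i for all u∈Ĵ. Fix any discrete interval I=[c:d]⊆Ĵ with i∈I and suppose that u^τ_{I,Ĵ} is an integer with 0 ≤ u^τ_{I,Ĵ} < |I|. Then θ̂^max_i ≥ y_{I,(u^τ_{I,Ĵ}+1)}. -/

import Mathlib

open scoped BigOperators

noncomputable section

namespace QTVD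

/-- Quantile (check) loss `ρ_τ(x) = max{τx, (τ-1)x}`. -/
def qloss (τ x : ℝ) : ℝ := max (τ * x) ((τ - 1) * x)

/-- Total variation `TV(θ) = ∑ |θ_{i+1} - θ_i|` (coordinates indexed `0,…,n-1`). -/
def TV {n : ℕ} (θ : Fin n → ℝ) : ℝ :=
  ∑ i : Fin n, if h : (i : ℕ) + 1 < n then |θ ⟨(i : ℕ) + 1, h⟩ - θ i| else 0

/-- Quantile TVD objective. -/
def obj {n : ℕ} (τ lam : ℝ) (y θ : Fin n → ℝ) : ℝ :=
  (∑ i : Fin n, qloss τ (y i - θ i)) + lam * TV θ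

/-- Quantile TVD solution set `S^τ`. -/
def sol {n : ℕ} (τ lam : ℝ) (y : Fin n → ℝ) : Set (Fin n → ℝ) :=
  {θ | ∀ η : Fin n → ℝ, obj τ lam y θ ≤ obj τ lam y η}

/-- `k`-th smallest entry of `y` restricted to `I` (as extended real;
`⊥` if `k ≤ 0`, `⊤` if `k ≥ |I| + 1`). -/
def orderStat {n : ℕ} (y : Fin n → ℝ) (I : Finset (Fin n)) (k : ℤ) : EReal :=
  if k ≤ 0 then ⊥
  else if (I.card : ℤ) < k then ⊤
  else (((I.val.map y).sort (· ≤ ·)).getD (k.toNat - 1) 0 : ℝ)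

/-- The constant `C_{I,J}` for discrete intervals `I=[c:d] ⊆ J=[a:b] ⊆ [0:n-1]`
(0-based indexing; 1-based `[s:t] ⊆ [j1:j2] ⊆ [1:n]` corresponds to
`c = s-1, d = t-1, a = j1-1, b = j2-1`). -/
def Cconst (n c d a b : ℕ) : ℝ :=
  if 0 < a ∧ b < n - 1 then
    if a < c ∧ d < b then 1 else if c = a ∧ d = b then -1 else 0
  else if a = 0 ∧ b < n - 1 then
    if a < c ∧ d < b then 1 else if c = a ∧ d = b then -(1/2)
      else if c = 0 ∧ d < b then 1/2 else 0
  else if 0 < a ∧ b = n - 1 then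
    if a < c ∧ d < b then 1 else if c = a ∧ d = b then -(1/2)
      else if a < c ∧ d = b then 1/2 else 0
  else
    if a < c ∧ d < b then 1 else if c = a ∧ d = b then 0 else 1/2

/-- `u^τ_{I,J} = τ|I| - 2λ C_{I,J}` for `I=[c:d] ⊆ J=[a:b]`. -/
def uIJ (τ lam : ℝ) (n c d a b : ℕ) : ℝ :=
  τ * ((d : ℝ) - (c : ℝ) + 1) - 2 * lam * Cconst n c d a b

/-- `l^τ_{I,J} = τ|I| + 2λ C_{I,J}` for `I=[c:d] ⊆ J=[a:b]`. -/
def lIJ (τ lam : ℝ) (n c d a b : ℕ) : ℝ :=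
  τ * ((d : ℝ) - (c : ℝ) + 1) + 2 * lam * Cconst n c d a b

/-- Upper envelope `U^τ_i`: min over intervals `J ∋ i` of the max over
subintervals `I ⊆ J` with `i ∈ I` of `y_{I,(⌊u^τ_{I,J}⌋+1)}`. -/
def Uenv {n : ℕ} (τ lam : ℝ) (y : Fin n → ℝ) (i : Fin n) : EReal :=
  ⨅ (a : Fin n) (b : Fin n) (_ : a ≤ i) (_ : i ≤ b),
    ⨆ (c : Fin n) (d : Fin n) (_ : a ≤ c) (_ : c ≤ i) (_ : i ≤ d) (_ : d ≤ b),
      orderStat y (Finset.Icc c d) (⌊uIJ τ lam n (c : ℕ) (d : ℕ) (a : ℕ) (b : ℕ)⌋ + 1)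

/-- Lower envelope `L^τ_i`: max over intervals `J ∋ i` of the min over
subintervals `I ⊆ J` with `i ∈ I` of `y_{I,(⌈l^τ_{I,J}⌉)}`. -/
def Lenv {n : ℕ} (τ lam : ℝ) (y : Fin n → ℝ) (i : Fin n) : EReal :=
  ⨆ (a : Fin n) (b : Fin n) (_ : a ≤ i) (_ : i ≤ b),
    ⨅ (c : Fin n) (d : Fin n) (_ : a ≤ c) (_ : c ≤ i) (_ : i ≤ d) (_ : d ≤ b),
      orderStat y (Finset.Icc c d) ⌈lIJ τ lam n (c : ℕ) (d : ℕ) (a : ℕ) (b : ℕ)⌉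

/-- Admissible dual (KKT) variables `(g, z)` for a candidate solution `θ`.
`z` is indexed by `Fin (n+1)` (so `z 0,…,z n` with `z 0 = z n = 0`); the
edge between coordinates `j` and `j+1` (0-based) corresponds to `z (j+1)`. -/
def IsDual {n : ℕ} (τ lam : ℝ) (y θ : Fin n → ℝ) (g : Fin n → ℝ)
    (z : Fin (n + 1) → ℝ) : Prop :=
  z 0 = 0 ∧ z (Fin.last n) = 0 ∧
  (∀ j : Fin n, ∀ h : (j : ℕ) + 1 < n,
    (θ ⟨(j : ℕ) + 1, h⟩ < θ j → z j.succ = lam) ∧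
    (θ j = θ ⟨(j : ℕ) + 1, h⟩ → -lam ≤ z j.succ ∧ z j.succ ≤ lam) ∧
    (θ j < θ ⟨(j : ℕ) + 1, h⟩ → z j.succ = -lam)) ∧
  (∀ j : Fin n,
    (θ j < y j → g j = -τ) ∧
    (θ j = y j → -τ ≤ g j ∧ g j ≤ 1 - τ) ∧
    (y j < θ j → g j = 1 - τ)) ∧
  (∀ a b : Fin n, a ≤ b → (∑ j ∈ Finset.Icc a b, g j) = z a.castSucc - z b.succ)

/-- `sign_+(x) = 1` if `x ≥ 0`, `-1` if `x < 0`. -/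
def signP (x : ℝ) : ℝ := if 0 ≤ x then 1 else -1

/-- `sign_-(x) = 1` if `x > 0`, `-1` if `x ≤ 0`. -/
def signM (x : ℝ) : ℝ := if 0 < x then 1 else -1

/-- Submodularity with respect to the coordinatewise lattice structure on `ℝ^n`. -/
def Submodular {n : ℕ} (P : (Fin n → ℝ) → ℝ) : Prop :=
  ∀ x y : Fin n → ℝ, P (x ⊔ y) + P (x ⊓ y) ≤ P x + P y

/-- Penalized quantile regression objective with a general penalty `P`. -/
def Gobj {n : ℕ} (τ lam : ℝ) (y : Fin n → ℝ) (P : (Fin n → ℝ) → ℝ)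
    (θ : Fin n → ℝ) : ℝ :=
  (∑ j : Fin n, qloss τ (y j - θ j)) + lam * P θ

end QTVD

lemma aux_sorted_countP (l : List ℝ) (hl : l.Pairwise (· ≤ ·)) (k : ℕ) (hk : k < l.length) :
    l.length - k ≤ l.countP (fun x => decide (l[k] ≤ x)) := by
  have hall : ∀ x ∈ l.drop k, (fun x => decide (l[k] ≤ x)) x = true := by
    intro x hx
    obtain ⟨j, hj, rfl⟩ := List.mem_iff_getElem.mp hx
    have hkj : k + j < l.length := by
      have := hj; rw [List.length_drop] at this; omega
    rw [List.getElem_drop]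
    simp only [decide_eq_true_eq]
    have hle : (⟨k, hk⟩ : Fin l.length) ≤ ⟨k + j, hkj⟩ := by
      simp [Fin.le_def]
    simpa using hl.rel_get_of_le hle
  have h1 : (l.drop k).countP (fun x => decide (l[k] ≤ x)) = (l.drop k).length :=
    List.countP_eq_length.mpr hall
  have h2 := (List.drop_sublist k l).countP_le (p := fun x => decide (l[k] ≤ x))
  rw [h1, List.length_drop] at h2
  omega

lemma aux_qloss_nonneg (τ x : ℝ) (hx : 0 ≤ x) : QTVD.qloss τ x = τ * x := by
  unfold QTVD.qloss
  apply max_eq_left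
  nlinarith

lemma aux_qloss_shift (τ x ε : ℝ) (hτ : τ ≤ 1) (hε : 0 ≤ ε) :
    QTVD.qloss τ (x - ε) ≤ QTVD.qloss τ x + (1 - τ) * ε := by
  unfold QTVD.qloss
  apply max_le
  · have h1 : τ * (x - ε) ≤ τ * x + (1 - τ) * ε := by nlinarith
    exact h1.trans (by have := le_max_left (τ * x) ((τ - 1) * x); linarith)
  · have h1 : (τ - 1) * (x - ε) = (τ - 1) * x + (1 - τ) * ε := by ring
    rw [h1]
    have := le_max_right (τ * x) ((τ - 1) * x); linarith

set_option maxHeartbeats 2000000 in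
lemma aux_eLR (n aN bN cN dN : ℕ) (ε : ℝ) (hε : 0 ≤ ε)
    (h1 : aN ≤ cN) (h2 : cN ≤ dN) (h3 : dN ≤ bN) (h4 : bN < n) :
    (if cN = 0 then 0 else if cN = aN then -ε else ε) +
      (if dN + 1 = n then 0 else if dN = bN then -ε else ε)
      ≤ 2 * QTVD.Cconst n cN dN aN bN * ε := by
  unfold QTVD.Cconst
  split_ifs <;> first | linarith | (exfalso; omega)
set_option maxHeartbeats 1600000 in
/-- One order statistic upgrade.
Let `θmax ∈ S^τ` attain the maximal feasible value at location `i`, let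
`Ĵ = [a:b]` be the largest interval containing `i` on which `θmax_u ≤ θmax_i`,
and let `I = [c:d] ⊆ Ĵ` contain `i` with `u^τ_{I,Ĵ}` an integer `K` satisfying
`0 ≤ K < |I|`. Then `θmax_i ≥ y_{I,(K+1)}`. -/
theorem one_order_statistic_upgrade
    {n : ℕ} (τ lam : ℝ) (hτ0 : 0 < τ) (hτ1 : τ < 1) (hlam : 0 ≤ lam)
    (y : Fin n → ℝ) (i : Fin n) (θmax : Fin n → ℝ)
    (hθ : θmax ∈ QTVD.sol τ lam y)
    (hattain : ∀ θ ∈ QTVD.sol τ lam y, θ i ≤ θmax i)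
    (a b : Fin n) (hai : a ≤ i) (hib : i ≤ b)
    (hJle : ∀ u ∈ Finset.Icc a b, θmax u ≤ θmax i)
    (hmaxl : ∀ _h : 0 < (a : ℕ),
      θmax i < θmax ⟨(a : ℕ) - 1, lt_of_le_of_lt (Nat.sub_le _ _) a.isLt⟩)
    (hmaxr : ∀ h : (b : ℕ) + 1 < n, θmax i < θmax ⟨(b : ℕ) + 1, h⟩)
    (c d : Fin n) (hac : a ≤ c) (hci : c ≤ i) (hid : i ≤ d) (hdb : d ≤ b)
    (K : ℤ) (hK : (K : ℝ) = QTVD.uIJ τ lam n c d a b)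
    (hK0 : 0 ≤ K) (hKlt : QTVD.uIJ τ lam n c d a b < (d : ℝ) - (c : ℝ) + 1) :
    QTVD.orderStat y (Finset.Icc c d) (K + 1) ≤ ((θmax i : ℝ) : EReal) := by
  by_contra hcon
  have hcn := c.isLt
  have hdn := d.isLt
  have han := a.isLt
  have hbn := b.isLt
  have hac' : (a:ℕ) ≤ (c:ℕ) := hac
  have hci' : (c:ℕ) ≤ (i:ℕ) := hci
  have hid' : (i:ℕ) ≤ (d:ℕ) := hid
  have hdb' : (d:ℕ) ≤ (b:ℕ) := hdb
  have hcd : (c:ℕ) ≤ (d:ℕ) := le_trans hci' hid'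
  set N := (Finset.Icc c d).card with hNdef
  have hN : N = (d:ℕ) + 1 - (c:ℕ) := by rw [hNdef, Fin.card_Icc]
  have hNr : (N:ℝ) = (d:ℝ) - (c:ℝ) + 1 := by
    rw [hN]
    have h5 : (c:ℕ) ≤ (d:ℕ) + 1 := by omega
    rw [Nat.cast_sub h5]
    push_cast
    ring
  have hKltN : K < (N:ℤ) := by
    have h5 : (K:ℝ) < (N:ℝ) := by rw [hNr, hK]; exact hKlt
    exact_mod_cast h5
  set k := K.toNat with hkdef
  have hkK : (k:ℤ) = K := Int.toNat_of_nonneg hK0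
  have hkN : k < N := by omega
  set l := ((Finset.Icc c d).val.map y).sort (· ≤ ·) with hldef
  have hlen : l.length = N := by
    rw [hldef, Multiset.length_sort, Multiset.card_map, hNdef]
    rfl
  have hkl : k < l.length := by omega
  set v := l[k]'hkl with hvdef
  have horder : QTVD.orderStat y (Finset.Icc c d) (K + 1) = ((v : ℝ) : EReal) := by
    unfold QTVD.orderStat
    rw [if_neg (by omega), if_neg (by rw [← hNdef]; omega)]
    rw [← hldef]
    have hidx : (K + 1).toNat - 1 = k := by omega
    rw [hidx, List.getD_eq_getElem l 0 hkl]
  have hv : θmax i < v := by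
    rw [horder] at hcon
    exact_mod_cast not_le.mp hcon
  set A := (Finset.Icc c d).filter (fun u => v ≤ y u) with hAdef
  have hcount : N - k ≤ A.card := by
    have h1 := aux_sorted_countP l (Multiset.pairwise_sort _ _) k hkl
    have h2 : Multiset.countP (fun x => v ≤ x) ((Finset.Icc c d).val.map y)
        = l.countP (fun x => decide (v ≤ x)) := by
      conv_lhs => rw [← Multiset.sort_eq ((Finset.Icc c d).val.map y) (· ≤ ·), ← hldef]
      rfl
    have h3 : Multiset.countP (fun x => v ≤ x) ((Finset.Icc c d).val.map y) = A.card := by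
      rw [Multiset.countP_map]
      rfl
    rw [← hvdef] at h1
    omega
  -- the perturbation size ε
  set gapL := if hA : 0 < (a:ℕ) then
      θmax ⟨(a:ℕ) - 1, lt_of_le_of_lt (Nat.sub_le _ _) a.isLt⟩ - θmax i else 1 with hgapL
  set gapR := if hB : (b:ℕ) + 1 < n then θmax ⟨(b:ℕ) + 1, hB⟩ - θmax i else 1 with hgapR
  have hgapLpos : 0 < gapL := by
    rw [hgapL]
    split_ifs with h
    · linarith [hmaxl h]
    · norm_num
  have hgapRpos : 0 < gapR := by
    rw [hgapR]
    split_ifs with h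
    · linarith [hmaxr h]
    · norm_num
  set ε := min (v - θmax i) (min gapL gapR) with hεdef
  have hε : 0 < ε := lt_min (by linarith) (lt_min hgapLpos hgapRpos)
  have hεv : ε ≤ v - θmax i := min_le_left _ _
  have hεgL : ε ≤ gapL := le_trans (min_le_right _ _) (min_le_left _ _)
  have hεgR : ε ≤ gapR := le_trans (min_le_right _ _) (min_le_right _ _)
  have hεL : ∀ hA : 0 < (a:ℕ),
      ε ≤ θmax ⟨(a:ℕ) - 1, lt_of_le_of_lt (Nat.sub_le _ _) a.isLt⟩ - θmax i := by
    intro hA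
    rw [hgapL, dif_pos hA] at hεgL
    exact hεgL
  have hεR : ∀ hB : (b:ℕ) + 1 < n, ε ≤ θmax ⟨(b:ℕ) + 1, hB⟩ - θmax i := by
    intro hB
    rw [hgapR, dif_pos hB] at hεgR
    exact hεgR
  -- the perturbed candidate
  set η := fun u : Fin n =>
    if (c:ℕ) ≤ (u:ℕ) ∧ (u:ℕ) ≤ (d:ℕ) then θmax u + ε else θmax u with hηdef
  have hηin : ∀ u : Fin n, (c:ℕ) ≤ (u:ℕ) → (u:ℕ) ≤ (d:ℕ) → η u = θmax u + ε := by
    intro u h1 h2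
    simp only [hηdef]
    rw [if_pos ⟨h1, h2⟩]
  have hηout : ∀ u : Fin n, ¬((c:ℕ) ≤ (u:ℕ) ∧ (u:ℕ) ≤ (d:ℕ)) → η u = θmax u := by
    intro u h1
    simp only [hηdef]
    rw [if_neg h1]
  have hθle : ∀ u : Fin n, (a:ℕ) ≤ (u:ℕ) → (u:ℕ) ≤ (b:ℕ) → θmax u ≤ θmax i := by
    intro u h1 h2
    exact hJle u (Finset.mem_Icc.mpr ⟨Fin.le_def.mpr h1, Fin.le_def.mpr h2⟩)
  -- loss comparison
  set W := fun u : Fin n =>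
    if (c:ℕ) ≤ (u:ℕ) ∧ (u:ℕ) ≤ (d:ℕ) then
      (if v ≤ y u then -(τ * ε) else (1 - τ) * ε) else 0 with hWdef
  have hpt : ∀ u : Fin n,
      QTVD.qloss τ (y u - η u) ≤ QTVD.qloss τ (y u - θmax u) + W u := by
    intro u
    by_cases hu : (c:ℕ) ≤ (u:ℕ) ∧ (u:ℕ) ≤ (d:ℕ)
    · rw [hηin u hu.1 hu.2]
      simp only [hWdef]
      rw [if_pos hu]
      have hθu : θmax u ≤ θmax i := hθle u (by omega) (by omega)
      by_cases hvy : v ≤ y u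
      · rw [if_pos hvy]
        have h0 : 0 ≤ y u - (θmax u + ε) := by linarith
        have h0' : 0 ≤ y u - θmax u := by linarith
        rw [aux_qloss_nonneg τ _ h0, aux_qloss_nonneg τ _ h0']
        have h9 : τ * (y u - (θmax u + ε)) = τ * (y u - θmax u) + -(τ * ε) := by ring
        linarith
      · rw [if_neg hvy]
        have h5 : y u - (θmax u + ε) = (y u - θmax u) - ε := by ring
        rw [h5]
        exact aux_qloss_shift τ _ ε hτ1.le hε.le
    · rw [hηout u hu]
      simp only [hWdef]
      rw [if_neg hu, add_zero]
  have hsum1 : (∑ u, QTVD.qloss τ (y u - η u))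
      ≤ (∑ u, QTVD.qloss τ (y u - θmax u)) + ∑ u, W u := by
    rw [← Finset.sum_add_distrib]
    exact Finset.sum_le_sum fun u _ => hpt u
  have hWsum : ∑ u, W u
      = (A.card : ℝ) * (-(τ * ε)) + ((N - A.card : ℕ) : ℝ) * ((1 - τ) * ε) := by
    have hfil : Finset.univ.filter (fun u : Fin n => (c:ℕ) ≤ (u:ℕ) ∧ (u:ℕ) ≤ (d:ℕ))
        = Finset.Icc c d := by
      ext u
      simp only [Finset.mem_filter, Finset.mem_univ, true_and, Finset.mem_Icc, Fin.le_def]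
    have e0 : ∑ u, W u = ∑ u ∈ Finset.Icc c d,
        (if v ≤ y u then -(τ * ε) else (1 - τ) * ε) := by
      simp only [hWdef]
      rw [← hfil, Finset.sum_filter]
    rw [e0, Finset.sum_ite, Finset.sum_const, Finset.sum_const, nsmul_eq_mul, nsmul_eq_mul]
    have hcompl : (Finset.filter (fun u => ¬ v ≤ y u) (Finset.Icc c d)).card = N - A.card := by
      have := Finset.card_filter_add_card_filter_not
        (s := Finset.Icc c d) (p := fun u => v ≤ y u)
      rw [← hAdef, ← hNdef] at this
      omega
    rw [hcompl, ← hAdef]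
  -- TV comparison
  set eL := if (c:ℕ) = 0 then (0:ℝ) else if (c:ℕ) = (a:ℕ) then -ε else ε with heL
  set eR := if (d:ℕ) + 1 = n then (0:ℝ) else if (d:ℕ) = (b:ℕ) then -ε else ε with heR
  set B := fun j : Fin n =>
    (if (j:ℕ) + 1 = (c:ℕ) then eL else 0)
      + (if ((j:ℕ) = (d:ℕ) ∧ (d:ℕ) + 1 < n) then eR else 0) with hBdef
  have hTVpt : ∀ j : Fin n,
      (if h : (j:ℕ) + 1 < n then |η ⟨(j:ℕ) + 1, h⟩ - η j| else 0)
        ≤ (if h : (j:ℕ) + 1 < n then |θmax ⟨(j:ℕ) + 1, h⟩ - θmax j| else 0) + B j := by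
    intro j
    simp only [hBdef]
    by_cases hj : (j:ℕ) + 1 < n
    · rw [dif_pos hj, dif_pos hj]
      set j1 : Fin n := ⟨(j:ℕ) + 1, hj⟩ with hj1
      have hj1v : (j1:ℕ) = (j:ℕ) + 1 := rfl
      by_cases h1 : (c:ℕ) ≤ (j:ℕ) ∧ (j:ℕ) ≤ (d:ℕ)
      · by_cases h2 : (c:ℕ) ≤ (j1:ℕ) ∧ (j1:ℕ) ≤ (d:ℕ)
        · rw [hηin _ h1.1 h1.2, hηin _ h2.1 h2.2,
            if_neg (show ¬((j:ℕ) + 1 = (c:ℕ)) by omega),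
            if_neg (show ¬((j:ℕ) = (d:ℕ) ∧ (d:ℕ) + 1 < n) by omega)]
          have h9 : θmax j1 + ε - (θmax j + ε) = θmax j1 - θmax j := by ring
          rw [h9]
          simp
        · have hjd : (j:ℕ) = (d:ℕ) := by omega
          have hdn1 : (d:ℕ) + 1 < n := by omega
          rw [hηin _ h1.1 h1.2, hηout _ h2,
            if_neg (show ¬((j:ℕ) + 1 = (c:ℕ)) by omega), if_pos ⟨hjd, hdn1⟩]
          have hθj : θmax j ≤ θmax i := hθle j (by omega) (by omega)
          by_cases hdbq : (d:ℕ) = (b:ℕ)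
          · have hb1 : (b:ℕ) + 1 < n := by omega
            have hj1b : j1 = ⟨(b:ℕ) + 1, hb1⟩ := Fin.ext (show (j1:ℕ) = (b:ℕ) + 1 by omega)
            have hbig := hmaxr hb1
            have hεR' := hεR hb1
            rw [hj1b, heR, if_neg (show ¬((d:ℕ) + 1 = n) by omega), if_pos hdbq]
            rw [abs_of_nonneg (by linarith), abs_of_nonneg (by linarith)]
            linarith
          · rw [heR, if_neg (show ¬((d:ℕ) + 1 = n) by omega), if_neg hdbq]
            have h5 : θmax j1 - (θmax j + ε) = (θmax j1 - θmax j) - ε := by ring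
            rw [h5]
            have h6 := abs_sub (θmax j1 - θmax j) ε
            rw [abs_of_nonneg hε.le] at h6
            linarith
      · by_cases h2 : (c:ℕ) ≤ (j1:ℕ) ∧ (j1:ℕ) ≤ (d:ℕ)
        · have hjc : (j:ℕ) + 1 = (c:ℕ) := by omega
          rw [hηout _ h1, hηin _ h2.1 h2.2, if_pos hjc,
            if_neg (show ¬((j:ℕ) = (d:ℕ) ∧ (d:ℕ) + 1 < n) by omega), heL,
            if_neg (show ¬((c:ℕ) = 0) by omega)]
          have hθj1 : θmax j1 ≤ θmax i := hθle j1 (by omega) (by omega)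
          by_cases hcaq : (c:ℕ) = (a:ℕ)
          · rw [if_pos hcaq]
            have ha0 : 0 < (a:ℕ) := by omega
            have hjm : j = ⟨(a:ℕ) - 1, lt_of_le_of_lt (Nat.sub_le _ _) a.isLt⟩ :=
              Fin.ext (show (j:ℕ) = (a:ℕ) - 1 by omega)
            have hbig := hmaxl ha0
            have hεL' := hεL ha0
            rw [hjm]
            rw [abs_of_nonpos (by linarith), abs_of_nonpos (by linarith)]
            linarith
          · rw [if_neg hcaq]
            have h5 : θmax j1 + ε - θmax j = (θmax j1 - θmax j) + ε := by ring
            rw [h5]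
            have h6 := abs_add_le (θmax j1 - θmax j) ε
            rw [abs_of_nonneg hε.le] at h6
            linarith
        · rw [hηout _ h1, hηout _ h2,
            if_neg (show ¬((j:ℕ) + 1 = (c:ℕ)) by omega),
            if_neg (show ¬((j:ℕ) = (d:ℕ) ∧ (d:ℕ) + 1 < n) by omega)]
          simp
    · rw [dif_neg hj, dif_neg hj,
          if_neg (show ¬((j:ℕ) + 1 = (c:ℕ)) by omega),
          if_neg (show ¬((j:ℕ) = (d:ℕ) ∧ (d:ℕ) + 1 < n) by omega)]
      simp
  have hBsum : ∑ j : Fin n, B j = eL + eR := by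
    simp only [hBdef]
    rw [Finset.sum_add_distrib]
    have hs1 : (∑ j : Fin n, if (j:ℕ) + 1 = (c:ℕ) then eL else 0) = eL := by
      by_cases hc0 : (c:ℕ) = 0
      · have heL0 : eL = 0 := by rw [heL, if_pos hc0]
        rw [heL0]
        apply Finset.sum_eq_zero
        intro j _
        rw [if_neg (show ¬((j:ℕ) + 1 = (c:ℕ)) by omega)]
      · have hcpos : 0 < (c:ℕ) := Nat.pos_of_ne_zero hc0
        rw [Finset.sum_eq_single_of_mem (⟨(c:ℕ) - 1, by omega⟩ : Fin n)
          (Finset.mem_univ _)]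
        · rw [if_pos (show (c:ℕ) - 1 + 1 = (c:ℕ) by omega)]
        · intro j _ hjne
          apply if_neg
          intro hheq
          exact hjne (Fin.ext (show (j:ℕ) = (c:ℕ) - 1 by omega))
    have hs2 : (∑ j : Fin n, if ((j:ℕ) = (d:ℕ) ∧ (d:ℕ) + 1 < n) then eR else 0) = eR := by
      by_cases hdn1 : (d:ℕ) + 1 = n
      · have heR0 : eR = 0 := by rw [heR, if_pos hdn1]
        rw [heR0]
        apply Finset.sum_eq_zero
        intro j _
        rw [if_neg (show ¬((j:ℕ) = (d:ℕ) ∧ (d:ℕ) + 1 < n) by omega)]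
      · have hdlt : (d:ℕ) + 1 < n := by omega
        rw [Finset.sum_eq_single_of_mem d (Finset.mem_univ _)]
        · rw [if_pos ⟨rfl, hdlt⟩]
        · intro j _ hjne
          apply if_neg
          intro hheq
          exact hjne (Fin.ext hheq.1)
    rw [hs1, hs2]
  have hTV : QTVD.TV η ≤ QTVD.TV θmax + (eL + eR) := by
    unfold QTVD.TV
    have h6 := Finset.sum_le_sum fun j (_ : j ∈ Finset.univ) => hTVpt j
    rw [Finset.sum_add_distrib, hBsum] at h6
    exact h6
  have heLR : eL + eR ≤ 2 * QTVD.Cconst n (c:ℕ) (d:ℕ) (a:ℕ) (b:ℕ) * ε := by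
    have h7 := aux_eLR n (a:ℕ) (b:ℕ) (c:ℕ) (d:ℕ) ε hε.le hac' hcd hdb' hbn
    rw [← heL, ← heR] at h7
    exact h7
  -- assemble
  have hAN : A.card ≤ N := by
    rw [hNdef, hAdef]
    exact Finset.card_filter_le _ _
  have hANr : ((N - A.card : ℕ) : ℝ) = (N:ℝ) - (A.card:ℝ) := by
    rw [Nat.cast_sub hAN]
  have hAge : (N:ℝ) - (K:ℝ) ≤ (A.card:ℝ) := by
    have h7 : ((N - k : ℕ) : ℝ) ≤ (A.card:ℝ) := Nat.cast_le.mpr hcount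
    have h8 : ((N - k : ℕ) : ℝ) = (N:ℝ) - (k:ℝ) := by rw [Nat.cast_sub hkN.le]
    have h9 : ((k:ℕ):ℝ) = (K:ℝ) := by
      have := congrArg (fun z : ℤ => (z : ℝ)) hkK
      simpa using this
    linarith
  have hKval : (K:ℝ) = τ * (N:ℝ) - 2 * lam * QTVD.Cconst n (c:ℕ) (d:ℕ) (a:ℕ) (b:ℕ) := by
    rw [hK]
    unfold QTVD.uIJ
    rw [hNr]
  have hfac : (1 - τ) * (N:ℝ) - (A.card:ℝ)
      + 2 * lam * QTVD.Cconst n (c:ℕ) (d:ℕ) (a:ℕ) (b:ℕ) ≤ 0 := by linarith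
  have hS : (A.card:ℝ) * (-(τ * ε)) + ((N - A.card : ℕ) : ℝ) * ((1 - τ) * ε)
      + 2 * lam * QTVD.Cconst n (c:ℕ) (d:ℕ) (a:ℕ) (b:ℕ) * ε ≤ 0 := by
    rw [hANr]
    nlinarith [mul_le_mul_of_nonneg_left hfac hε.le]
  have hobj : QTVD.obj τ lam y η ≤ QTVD.obj τ lam y θmax := by
    unfold QTVD.obj
    have hTVmul : lam * QTVD.TV η
        ≤ lam * QTVD.TV θmax + lam * (eL + eR) := by
      have h7 := mul_le_mul_of_nonneg_left hTV hlam
      linarith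
    have hCmul : lam * (eL + eR)
        ≤ 2 * lam * QTVD.Cconst n (c:ℕ) (d:ℕ) (a:ℕ) (b:ℕ) * ε := by
      have h7 := mul_le_mul_of_nonneg_left heLR hlam
      linarith
    rw [hWsum] at hsum1
    linarith
  have hsol : η ∈ QTVD.sol τ lam y := fun η' => le_trans hobj (hθ η')
  have hfin := hattain η hsol
  rw [hηin i hci' hid'] at hfin
  linarith
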